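/- Separation identity: let [·]: ℂ → ℂ be an odd function satisfying the Riemann relation. Then for all a, b, x, y ∈ ℂ with [a+x], [a-x], [a+y], [a-y], [a+b], [a-b] all nonzero, one has [x±y]/([a±x][a±y]) = [x±b]/([a±x][a±b]) - [y±b]/([a±y][a±b]). -/

import Mathlib

/-- Separation identity for an odd function satisfying the Riemann relation. -/
theorem separation_identity (f : ℂ → ℂ)
    (hodd : ∀ u : ℂ, f (-u) = -f u)
    (hR : ∀ x y u v : ℂ,
      f (x + u) * f (x - u) * (f (y + v) * f (y - v)) -
        f (x + v) * f (x - v) * (f (y + u) * f (y - u)) =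
      f (x + y) * f (x - y) * (f (u + v) * f (u - v)))
    (a b x y : ℂ)
    (hax : f (a + x) ≠ 0) (hax' : f (a - x) ≠ 0)
    (hay : f (a + y) ≠ 0) (hay' : f (a - y) ≠ 0)
    (hab : f (a + b) ≠ 0) (hab' : f (a - b) ≠ 0) :
    f (x + y) * f (x - y) / (f (a + x) * f (a - x) * (f (a + y) * f (a - y))) =
      f (x + b) * f (x - b) / (f (a + x) * f (a - x) * (f (a + b) * f (a - b))) -
        f (y + b) * f (y - b) / (f (a + y) * f (a - y) * (f (a + b) * f (a - b))) := by
  have h := hR x y b a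
  have e1 : f (y - a) = - f (a - y) := by
    rw [show y - a = -(a - y) by ring, hodd]
  have e2 : f (x - a) = - f (a - x) := by
    rw [show x - a = -(a - x) by ring, hodd]
  have e3 : f (b - a) = - f (a - b) := by
    rw [show b - a = -(a - b) by ring, hodd]
  have e4 : f (y + a) = f (a + y) := by rw [add_comm]
  have e5 : f (x + a) = f (a + x) := by rw [add_comm]
  have e6 : f (b + a) = f (a + b) := by rw [add_comm]
  rw [e1, e2, e3, e4, e5, e6] at h
  -- h : [x±b]·(-[a±y]) - (-[a±x])·[y±b] = [x±y]·(-[a±b])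
  field_simp
  linear_combination h
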